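/- In any perfect 2-coloring T of GP(n,3) (n >= 7) with parameter matrix [[2,1],[2,1]], there is no index i with T(a_i) = T(a_{i+1}) = 2, i.e., no two consecutive outer vertices are both black. -/
import Mathlib


/-- The generalized Petersen graph `GP n k`. Vertices are pairs `(s, i)` with
`s : Bool` (`false` = outer vertex `aᵢ`, `true` = inner vertex `bᵢ`) and `i : ZMod n`.
Edges: `aᵢ aᵢ₊₁`, `aᵢ bᵢ`, `bᵢ bᵢ₊ₖ`. -/
def GP (n k : ℕ) : SimpleGraph (Bool × ZMod n) :=
  SimpleGraph.fromRel (fun v w =>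
    (v.1 = false ∧ w.1 = false ∧ w.2 = v.2 + 1) ∨
    (v.1 = false ∧ w.1 = true ∧ w.2 = v.2) ∨
    (v.1 = true ∧ w.1 = true ∧ w.2 = v.2 + (k : ZMod n)))

/-- `T` is a perfect 2-coloring of `G` with parameter matrix `A`:
`T` is surjective onto the two colors (color `0` = white = "1", color `1` = black = "2"),
and every vertex of color `i` has exactly `A i j` neighbors of color `j`. -/
def IsPerfectColoring {V : Type*} (G : SimpleGraph V) (T : V → Fin 2)
    (A : Matrix (Fin 2) (Fin 2) ℕ) : Prop :=
  Function.Surjective T ∧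
  ∀ v : V, ∀ j : Fin 2, {w | G.Adj v w ∧ T w = j}.ncard = A (T v) j

lemma zmod_ne_zero {n : ℕ} (hn : 7 ≤ n) (a : ℕ) (h1 : 0 < a) (h2 : a < 7) : (a : ZMod n) ≠ 0 := by
  haveI : NeZero n := ⟨by omega⟩
  rw [Ne, ZMod.natCast_eq_zero_iff]
  intro h
  exact absurd (Nat.le_of_dvd h1 h) (by omega)

lemma GP_adj_a {n : ℕ} (hn : 7 ≤ n) (j : ZMod n) (w : Bool × ZMod n) :
    (GP n 3).Adj (false, j) w ↔ w = (false, j - 1) ∨ w = (false, j + 1) ∨ w = (true, j) := by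
  have h1 : (1 : ZMod n) ≠ 0 := by simpa using zmod_ne_zero hn 1 (by norm_num) (by norm_num)
  obtain ⟨t, m⟩ := w
  simp only [GP, SimpleGraph.fromRel_adj, Prod.mk.injEq, ne_eq]
  constructor
  · rintro ⟨hne, hrel⟩
    rcases hrel with (⟨-, rfl, rfl⟩|⟨-, rfl, rfl⟩|⟨h, -, -⟩)|(⟨rfl, -, hm⟩|⟨-, h, -⟩|⟨-, h, -⟩)
    · exact Or.inr (Or.inl ⟨rfl, rfl⟩)
    · exact Or.inr (Or.inr ⟨rfl, rfl⟩)
    · simp at h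
    · exact Or.inl ⟨rfl, eq_sub_of_add_eq hm.symm⟩
    · simp at h
    · simp at h
  · rintro (⟨rfl, rfl⟩|⟨rfl, rfl⟩|⟨rfl, rfl⟩)
    · have key : j = j - 1 + 1 := by ring
      refine ⟨?_, by tauto⟩
      rintro ⟨-, hj⟩
      exact h1 (by linear_combination hj)
    · have key : j + 1 = j + 1 := rfl
      refine ⟨?_, by tauto⟩
      rintro ⟨-, hj⟩
      exact h1 (by linear_combination -hj)
    · refine ⟨?_, by tauto⟩
      rintro ⟨h, -⟩
      simp at h

lemma GP_adj_b {n : ℕ} (hn : 7 ≤ n) (j : ZMod n) (w : Bool × ZMod n) :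
    (GP n 3).Adj (true, j) w ↔ w = (true, j - 3) ∨ w = (true, j + 3) ∨ w = (false, j) := by
  have h3 : (3 : ZMod n) ≠ 0 := by
    have := zmod_ne_zero hn 3 (by norm_num) (by norm_num); simpa using this
  have hc : ((3 : ℕ) : ZMod n) = (3 : ZMod n) := by push_cast; ring
  obtain ⟨t, m⟩ := w
  simp only [GP, SimpleGraph.fromRel_adj, Prod.mk.injEq, ne_eq]
  constructor
  · rintro ⟨hne, hrel⟩
    rcases hrel with (⟨h, -, -⟩|⟨h, -, -⟩|⟨-, rfl, rfl⟩)|(⟨-, h, -⟩|⟨rfl, -, rfl⟩|⟨rfl, -, hm⟩)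
    · simp at h
    · simp at h
    · exact Or.inr (Or.inl ⟨rfl, by rw [hc]⟩)
    · simp at h
    · exact Or.inr (Or.inr ⟨rfl, rfl⟩)
    · refine Or.inl ⟨rfl, ?_⟩
      rw [hc] at hm
      exact eq_sub_of_add_eq hm.symm
  · rintro (⟨rfl, rfl⟩|⟨rfl, rfl⟩|⟨rfl, rfl⟩)
    · have key : j = j - 3 + ((3:ℕ) : ZMod n) := by rw [hc]; ring
      refine ⟨?_, by tauto⟩
      rintro ⟨-, hj⟩
      exact h3 (by linear_combination hj)
    · have key : j + 3 = j + ((3:ℕ) : ZMod n) := by rw [hc]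
      refine ⟨?_, Or.inl (Or.inr (Or.inr ⟨by simp, by simp, key⟩))⟩
      rintro ⟨-, hj⟩
      exact h3 (by linear_combination -hj)
    · refine ⟨?_, by tauto⟩
      rintro ⟨h, -⟩
      simp at h

lemma pair_black {V : Type*} [Finite V] (G : SimpleGraph V) (T : V → Fin 2)
    (v x y : V) (hxy : x ≠ y) (hax : G.Adj v x) (hay : G.Adj v y)
    (hc : {w | G.Adj v w ∧ T w = 1}.ncard = 1) (hx : T x = 1) : T y = 0 := by
  by_contra hy
  have hy1 : T y = 1 := by omega
  have hsub : ({x, y} : Set V) ⊆ {w | G.Adj v w ∧ T w = 1} := by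
    rintro w (rfl | rfl)
    · exact ⟨hax, hx⟩
    · exact ⟨hay, hy1⟩
  have := Set.ncard_le_ncard hsub (Set.toFinite _)
  rw [Set.ncard_pair hxy, hc] at this
  omega

lemma force_black {V : Type*} [Finite V] (G : SimpleGraph V) (T : V → Fin 2)
    (v x y z : V) (hcov : ∀ w, G.Adj v w → w = x ∨ w = y ∨ w = z)
    (hc : {w | G.Adj v w ∧ T w = 1}.ncard = 1)
    (hx : T x = 0) (hy : T y = 0) : T z = 1 := by
  by_contra hz
  have hz0 : T z = 0 := by omega
  have : {w | G.Adj v w ∧ T w = 1} = ∅ := by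
    rw [Set.eq_empty_iff_forall_notMem]
    rintro w ⟨haw, hw1⟩
    rcases hcov w haw with rfl | rfl | rfl <;> simp_all
  rw [this] at hc
  simp at hc

theorem stmt_4 (n : ℕ) (hn : 7 ≤ n) (T : Bool × ZMod n → Fin 2)
    (h : IsPerfectColoring (GP n 3) T !![2, 1; 2, 1]) :
    ∀ i : ZMod n, ¬ (T (false, i) = 1 ∧ T (false, i + 1) = 1) := by
  haveI : NeZero n := ⟨by omega⟩
  rintro i ⟨hA0, hA1⟩
  have h2 : (2 : ZMod n) ≠ 0 := by simpa using zmod_ne_zero hn 2 (by norm_num) (by norm_num)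
  -- every vertex has exactly one black neighbor
  have hc : ∀ v, {w | (GP n 3).Adj v w ∧ T w = 1}.ncard = 1 := by
    intro v
    have := h.2 v 1
    rcases (show T v = 0 ∨ T v = 1 by omega) with hv | hv <;> rw [hv] at this <;>
      simpa using this
  set G := GP n 3
  have adjaL : ∀ j : ZMod n, G.Adj (false, j) (false, j - 1) :=
    fun j => (GP_adj_a hn j _).mpr (Or.inl rfl)
  have adjaR : ∀ j : ZMod n, G.Adj (false, j) (false, j + 1) :=
    fun j => (GP_adj_a hn j _).mpr (Or.inr (Or.inl rfl))
  have adjaB : ∀ j : ZMod n, G.Adj (false, j) (true, j) :=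
    fun j => (GP_adj_a hn j _).mpr (Or.inr (Or.inr rfl))
  have adjbL : ∀ j : ZMod n, G.Adj (true, j) (true, j - 3) :=
    fun j => (GP_adj_b hn j _).mpr (Or.inl rfl)
  have adjbR : ∀ j : ZMod n, G.Adj (true, j) (true, j + 3) :=
    fun j => (GP_adj_b hn j _).mpr (Or.inr (Or.inl rfl))
  have adjbA : ∀ j : ZMod n, G.Adj (true, j) (false, j) :=
    fun j => (GP_adj_b hn j _).mpr (Or.inr (Or.inr rfl))
  have pne : ∀ (t : Bool) (a b : ZMod n), a ≠ b → ((t, a) : Bool × ZMod n) ≠ (t, b) :=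
    fun t a b hab he => hab (congrArg Prod.snd he)
  -- step 1 : neighbors of a_i
  have hAm1 : T (false, i - 1) = 0 :=
    pair_black G T (false, i) (false, i + 1) (false, i - 1)
      (pne _ _ _ (fun hh => h2 (by linear_combination hh))) (adjaR i) (adjaL i) (hc _) hA1
  have hB0 : T (true, i) = 0 :=
    pair_black G T (false, i) (false, i + 1) (true, i) (by simp) (adjaR i) (adjaB i) (hc _) hA1
  -- step 2 : neighbors of a_{i+1}
  have e1 : i + 1 - 1 = i := by ring
  have e2 : i + 1 + 1 = i + 2 := by ring
  have hA2 : T (false, i + 2) = 0 :=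
    pair_black G T (false, i + 1) (false, i) (false, i + 2)
      (pne _ _ _ (fun hh => h2 (by linear_combination -hh)))
      (by have := adjaL (i + 1); rwa [e1] at this)
      (by have := adjaR (i + 1); rwa [e2] at this) (hc _) hA0
  have hB1 : T (true, i + 1) = 0 :=
    pair_black G T (false, i + 1) (false, i) (true, i + 1) (by simp)
      (by have := adjaL (i + 1); rwa [e1] at this) (adjaB (i + 1)) (hc _) hA0
  -- step 3 : neighbors of b_i
  have hB3 : T (true, i + 3) = 0 :=
    pair_black G T (true, i) (false, i) (true, i + 3) (by simp) (adjbA i) (adjbR i) (hc _) hA0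
  -- step 4 : neighbors of b_{i+1}
  have e3 : i + 1 + 3 = i + 4 := by ring
  have hB4 : T (true, i + 4) = 0 :=
    pair_black G T (true, i + 1) (false, i + 1) (true, i + 4) (by simp) (adjbA (i + 1))
      (by have := adjbR (i + 1); rwa [e3] at this) (hc _) hA1
  -- step 5 : neighbors of a_{i-1}
  have e4 : i - 1 + 1 = i := by ring
  have e5 : i - 1 - 1 = i - 2 := by ring
  have hBm1 : T (true, i - 1) = 0 :=
    pair_black G T (false, i - 1) (false, i) (true, i - 1) (by simp)
      (by have := adjaR (i - 1); rwa [e4] at this) (adjaB (i - 1)) (hc _) hA0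
  -- step 6 : neighbors of a_{i+2}
  have e6 : i + 2 - 1 = i + 1 := by ring
  have e7 : i + 2 + 1 = i + 3 := by ring
  have hA3 : T (false, i + 3) = 0 :=
    pair_black G T (false, i + 2) (false, i + 1) (false, i + 3)
      (pne _ _ _ (fun hh => h2 (by linear_combination -hh)))
      (by have := adjaL (i + 2); rwa [e6] at this)
      (by have := adjaR (i + 2); rwa [e7] at this) (hc _) hA1
  -- step 7 : a_{i+4} is black
  have e8 : i + 3 - 1 = i + 2 := by ring
  have e9 : i + 3 + 1 = i + 4 := by ring
  have hA4 : T (false, i + 4) = 1 := by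
    refine force_black G T (false, i + 3) (false, i + 2) (true, i + 3) (false, i + 4)
      ?_ (hc _) hA2 hB3
    intro w hw
    rcases (GP_adj_a hn (i + 3) w).mp hw with hh | hh | hh
    · rw [e8] at hh; exact Or.inl hh
    · rw [e9] at hh; exact Or.inr (Or.inr hh)
    · exact Or.inr (Or.inl hh)
  -- step 8 : a_{i+5} is black
  have e10 : i + 4 - 1 = i + 3 := by ring
  have e11 : i + 4 + 1 = i + 5 := by ring
  have hA5 : T (false, i + 5) = 1 := by
    refine force_black G T (false, i + 4) (false, i + 3) (true, i + 4) (false, i + 5)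
      ?_ (hc _) hA3 hB4
    intro w hw
    rcases (GP_adj_a hn (i + 4) w).mp hw with hh | hh | hh
    · rw [e10] at hh; exact Or.inl hh
    · rw [e11] at hh; exact Or.inr (Or.inr hh)
    · exact Or.inr (Or.inl hh)
  -- step 9 : b_{i+5} is white
  have e12 : i + 5 - 1 = i + 4 := by ring
  have hB5 : T (true, i + 5) = 0 :=
    pair_black G T (false, i + 5) (false, i + 4) (true, i + 5) (by simp)
      (by have := adjaL (i + 5); rwa [e12] at this) (adjaB (i + 5)) (hc _) hA4
  -- step 10 : b_{i+5} is black, contradiction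
  have e13 : i + 2 - 3 = i - 1 := by ring
  have e14 : i + 2 + 3 = i + 5 := by ring
  have hB5' : T (true, i + 5) = 1 := by
    refine force_black G T (true, i + 2) (false, i + 2) (true, i - 1) (true, i + 5)
      ?_ (hc _) hA2 hBm1
    intro w hw
    rcases (GP_adj_b hn (i + 2) w).mp hw with hh | hh | hh
    · rw [e13] at hh; exact Or.inr (Or.inl hh)
    · rw [e14] at hh; exact Or.inr (Or.inr hh)
    · exact Or.inl hh
  rw [hB5] at hB5'
  exact absurd hB5' (by decide)
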